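/- In SL(3, ℂ), let ṡ₁ be the matrix with rows (0,i,0), (i,0,0), (0,0,1) and ṡ₂ the matrix with rows (1,0,0), (0,0,i), (0,i,0); for ζ ∈ ℂ let n¹²_ζ = I + ζ E₁₂ and n²³_ζ = I + ζ E₂₃; for z ∈ ℂ set a(z) = (1+|z|²)^(−1/2), and let κ₁(z) be the matrix with rows (i z a(z), i a(z), 0), (i a(z), −i (conj z) a(z), 0), (0,0,1) and κ₂(z) the matrix with rows (1,0,0), (0, i z a(z), i a(z)), (0, i a(z), −i (conj z) a(z)). Then for all ζ₁, ζ₂, ζ₃ ∈ ℂ, setting z₁ = ζ₁, z₂ = ζ₂ / sqrt(1+|ζ₁|²), and z₃ = (i (conj ζ₁) ζ₂ + ζ₃ (1+|ζ₁|²)) / sqrt(1+|ζ₁|²+|ζ₂|²), there exists a 3×3 upper-triangular complex matrix d with positive real diagonal entries such that n¹²_{ζ₁} * ṡ₁ * n²³_{ζ₂} * ṡ₂ * n¹²_{ζ₃} * ṡ₁ = κ₁(z₁) * κ₂(z₂) * κ₁(z₃) * d. -/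

import Mathlib

open Matrix

/-- The representative `ṡ₁` in `SL(3,ℂ)` of the simple reflection `r₁`. -/
def sdot1 : Matrix (Fin 3) (Fin 3) ℂ :=
  !![0, Complex.I, 0; Complex.I, 0, 0; 0, 0, 1]

/-- The representative `ṡ₂` in `SL(3,ℂ)` of the simple reflection `r₂`. -/
def sdot2 : Matrix (Fin 3) (Fin 3) ℂ :=
  !![1, 0, 0; 0, 0, Complex.I; 0, Complex.I, 0]

/-- The unipotent element `n¹²_ζ = I + ζ E₁₂`. -/
def n12 (ζ : ℂ) : Matrix (Fin 3) (Fin 3) ℂ := !![1, ζ, 0; 0, 1, 0; 0, 0, 1]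

/-- The unipotent element `n²³_ζ = I + ζ E₂₃`. -/
def n23 (ζ : ℂ) : Matrix (Fin 3) (Fin 3) ℂ := !![1, 0, 0; 0, 1, ζ; 0, 0, 1]

/-- `a(z) = (1 + |z|²)^(-1/2)`. -/
noncomputable def aFun (z : ℂ) : ℝ := (1 + ‖z‖ ^ 2) ^ (-(1 / 2 : ℝ))

/-- The special unitary factor `κ₁(z) = k(n_z ṡ₁)` in the first embedded `SL(2,ℂ)`. -/
noncomputable def kappa1 (z : ℂ) : Matrix (Fin 3) (Fin 3) ℂ :=
  !![Complex.I * z * (aFun z : ℂ), Complex.I * (aFun z : ℂ), 0;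
     Complex.I * (aFun z : ℂ), -Complex.I * (starRingEnd ℂ z) * (aFun z : ℂ), 0;
     0, 0, 1]

/-- The special unitary factor `κ₂(z) = k(n_z ṡ₂)` in the second embedded `SL(2,ℂ)`. -/
noncomputable def kappa2 (z : ℂ) : Matrix (Fin 3) (Fin 3) ℂ :=
  !![1, 0, 0;
     0, Complex.I * z * (aFun z : ℂ), Complex.I * (aFun z : ℂ);
     0, Complex.I * (aFun z : ℂ), -Complex.I * (starRingEnd ℂ z) * (aFun z : ℂ)]

lemma aFun_eq (z : ℂ) : aFun z = (Real.sqrt (1 + ‖z‖ ^ 2))⁻¹ := by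
  have h : (0:ℝ) ≤ 1 + ‖z‖ ^ 2 := by positivity
  rw [aFun, Real.rpow_neg h, ← Real.sqrt_eq_rpow]

set_option maxHeartbeats 4000000 in
lemma key (a b g c1 c2 c3 sA sB sC : ℂ)
    (hI : Complex.I^2 = -1)
    (hA : sA^2 = 1 + a*c1)
    (hB : sB^2 = 1 + a*c1 + b*c2)
    (hC : sC^2 = 1 + a*c1 + b*c2 +
      (Complex.I*c1*b + g*(1+a*c1)) * (-Complex.I*a*c2 + c3*(1+a*c1))) :
    !![Complex.I*a, Complex.I, 0; Complex.I, -Complex.I*c1, 0; 0, 0, sA] *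
    !![sB, 0, 0; 0, Complex.I*b, Complex.I*sA; 0, Complex.I*sA, -Complex.I*c2] *
    !![Complex.I*(Complex.I*c1*b + g*(1+a*c1)), Complex.I*sB, 0;
       Complex.I*sB, -Complex.I*(-Complex.I*a*c2 + c3*(1+a*c1)), 0; 0, 0, sC] *
    !![sB*sC^2, sB*sA^2*(sA^2*c3 - Complex.I*a*c2), sB*sA^2*(c1*c3 - Complex.I*c2);
       0, sA^2*sB^2, sA^2*(c1 + Complex.I*g*c2); 0, 0, sA*sC] =
    ((sA*sB*sC)^2) • !![-Complex.I*b - a*g, -a, -1; -g, -1, 0; -1, 0, 0] := by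
  ext i j
  fin_cases i <;> fin_cases j <;>
    simp only [Matrix.mul_fin_three, Matrix.smul_apply, Matrix.of_apply, Matrix.cons_val',
      Matrix.cons_val_zero, Matrix.cons_val_one, Matrix.head_cons, Matrix.empty_val',
      Matrix.cons_val_fin_one, Matrix.head_fin_const, Matrix.cons_val_two, Matrix.tail_cons,
      smul_eq_mul, Fin.zero_eta, Fin.mk_one, Fin.isValue, Fin.reduceFinMk]
  · -- 0,0
    linear_combination ((1:ℂ)*b*Complex.I + (1:ℂ)*b*g*c3*Complex.I + (2:ℂ)*b^2*c2*Complex.I + (1:ℂ)*b^2*c1*c3*Complex.I^2 + (1:ℂ)*b^2*g*c2*c3*Complex.I + (1:ℂ)*b^3*c2^2*Complex.I + (1:ℂ)*b^3*c1*c2*c3*Complex.I^2 + (1:ℂ)*a*g + (1:ℂ)*a*g^2*c3 + (2:ℂ)*a*b*c1*Complex.I + (2:ℂ)*a*b*g*c2 + (-1:ℂ)*a*b*g*c2*Complex.I^2 + (4:ℂ)*a*b*g*c1*c3*Complex.I + (1:ℂ)*a*b*g^2*c2*c3 + (2:ℂ)*a*b^2*c1*c2*Complex.I + (-1:ℂ)*a*b^2*c1*c2*Complex.I^3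 + (2:ℂ)*a*b^2*c1^2*c3*Complex.I^2 + (1:ℂ)*a*b^2*g*c2^2 + (-1:ℂ)*a*b^2*g*c2^2*Complex.I^2 + (3:ℂ)*a*b^2*g*c1*c2*c3*Complex.I + (-1:ℂ)*a*b^3*c1*c2^2*Complex.I^3 + (1:ℂ)*a*b^3*c1^2*c2*c3*Complex.I^2 + (2:ℂ)*a^2*g*c1 + (-1:ℂ)*a^2*g^2*c2*Complex.I + (3:ℂ)*a^2*g^2*c1*c3 + (1:ℂ)*a^2*b*c1^2*Complex.I + (2:ℂ)*a^2*b*g*c1*c2 + (-3:ℂ)*a^2*b*g*c1*c2*Complex.I^2 + (5:ℂ)*a^2*b*g*c1^2*c3*Complex.I + (-1:ℂ)*a^2*b*g^2*c2^2*Complex.I + (2:ℂ)*a^2*b*g^2*c1*c2*c3 + (-1:ℂ)*a^2*b^2*c1^2*c2*Complex.I^3 + (1:ℂ)*a^2*b^2*c1^3*c3*Complex.I^2 + (-2:ℂ)*a^2*b^2*g*c1*c2^2*Complex.I^2 + (2:ℂ)*a^2*b^2*g*c1^2*c2*c3*Complex.I + (1:ℂ)*a^3*g*c1^2 + (-2:ℂ)*a^3*g^2*c1*c2*Complex.I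 + (3:ℂ)*a^3*g^2*c1^2*c3 + (-2:ℂ)*a^3*b*g*c1^2*c2*Complex.I^2 + (2:ℂ)*a^3*b*g*c1^3*c3*Complex.I + (-1:ℂ)*a^3*b*g^2*c1*c2^2*Complex.I + (1:ℂ)*a^3*b*g^2*c1^2*c2*c3 + (-1:ℂ)*a^4*g^2*c1^2*c2*Complex.I + (1:ℂ)*a^4*g^2*c1^3*c3) * hA + ((1:ℂ)*b*Complex.I^3 + (1:ℂ)*b*sA^2*Complex.I + (1:ℂ)*b*g*c3*Complex.I^3 + (1:ℂ)*b*g*c3*sA^2*Complex.I + (1:ℂ)*b^2*c2*Complex.I^3 + (1:ℂ)*b^2*c2*sA^2*Complex.I + (1:ℂ)*b^2*c1*c3*Complex.I^4 + (1:ℂ)*b^2*c1*c3*sA^2*Complex.I^2 + (1:ℂ)*a*g*Complex.I^2 + (1:ℂ)*a*g*sA^2 + (1:ℂ)*a*g^2*c3*Complex.I^2 + (1:ℂ)*a*g^2*c3*sA^2 + (2:ℂ)*a*b*c1*Complex.I^3 + (1:ℂ)*a*b*c1*sA^2*Complex.I + (1:ℂ)*a*b*g*c2*Complex.I^2 + (-1:ℂ)*a*b*g*c2*Complex.I^4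 + (1:ℂ)*a*b*g*c2*sA^2 + (-1:ℂ)*a*b*g*c2*sA^2*Complex.I^2 + (4:ℂ)*a*b*g*c1*c3*Complex.I^3 + (3:ℂ)*a*b*g*c1*c3*sA^2*Complex.I + (1:ℂ)*a*b^2*c1*c2*Complex.I^3 + (-1:ℂ)*a*b^2*c1*c2*Complex.I^5 + (-1:ℂ)*a*b^2*c1*c2*sA^2*Complex.I^3 + (2:ℂ)*a*b^2*c1^2*c3*Complex.I^4 + (1:ℂ)*a*b^2*c1^2*c3*sA^2*Complex.I^2 + (2:ℂ)*a^2*g*c1*Complex.I^2 + (1:ℂ)*a^2*g*c1*sA^2 + (-1:ℂ)*a^2*g^2*c2*Complex.I^3 + (-1:ℂ)*a^2*g^2*c2*sA^2*Complex.I + (3:ℂ)*a^2*g^2*c1*c3*Complex.I^2 + (2:ℂ)*a^2*g^2*c1*c3*sA^2 + (1:ℂ)*a^2*b*c1^2*Complex.I^3 + (1:ℂ)*a^2*b*g*c1*c2*Complex.I^2 + (-3:ℂ)*a^2*b*g*c1*c2*Complex.I^4 + (-2:ℂ)*a^2*b*g*c1*c2*sA^2*Complex.I^2 + (5:ℂ)*a^2*b*g*c1^2*c3*Complex.I^3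 + (2:ℂ)*a^2*b*g*c1^2*c3*sA^2*Complex.I + (-1:ℂ)*a^2*b^2*c1^2*c2*Complex.I^5 + (1:ℂ)*a^2*b^2*c1^3*c3*Complex.I^4 + (1:ℂ)*a^3*g*c1^2*Complex.I^2 + (-2:ℂ)*a^3*g^2*c1*c2*Complex.I^3 + (-1:ℂ)*a^3*g^2*c1*c2*sA^2*Complex.I + (3:ℂ)*a^3*g^2*c1^2*c3*Complex.I^2 + (1:ℂ)*a^3*g^2*c1^2*c3*sA^2 + (-2:ℂ)*a^3*b*g*c1^2*c2*Complex.I^4 + (2:ℂ)*a^3*b*g*c1^3*c3*Complex.I^3 + (-1:ℂ)*a^4*g^2*c1^2*c2*Complex.I^3 + (1:ℂ)*a^4*g^2*c1^3*c3*Complex.I^2) * hB + ((1:ℂ)*b*sB^2*Complex.I^3 + (1:ℂ)*b*sA^2*sB^2*Complex.I + (1:ℂ)*a*g*sB^2*Complex.I^2 + (1:ℂ)*a*g*sA^2*sB^2 + (1:ℂ)*a*b*c1*sB^2*Complex.I^3 + (1:ℂ)*a^2*g*c1*sB^2*Complex.I^2) * hC + ((1:ℂ)*b*Complex.I + (1:ℂ)*b*g*c3*Complex.I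 + (2:ℂ)*b^2*c2*Complex.I + (1:ℂ)*b^2*c1*c3*Complex.I^2 + (1:ℂ)*b^2*g*c2*c3*Complex.I + (1:ℂ)*b^3*c2^2*Complex.I + (1:ℂ)*b^3*c1*c2*c3*Complex.I^2 + (1:ℂ)*a*g + (1:ℂ)*a*g^2*c3 + (3:ℂ)*a*b*c1*Complex.I + (2:ℂ)*a*b*g*c2 + (-1:ℂ)*a*b*g*c2*Complex.I^2 + (5:ℂ)*a*b*g*c1*c3*Complex.I + (1:ℂ)*a*b*g^2*c2*c3 + (4:ℂ)*a*b^2*c1*c2*Complex.I + (-1:ℂ)*a*b^2*c1*c2*Complex.I^3 + (3:ℂ)*a*b^2*c1^2*c3*Complex.I^2 + (1:ℂ)*a*b^2*g*c2^2 + (-1:ℂ)*a*b^2*g*c2^2*Complex.I^2 + (4:ℂ)*a*b^2*g*c1*c2*c3*Complex.I + (1:ℂ)*a*b^3*c1*c2^2*Complex.I + (-1:ℂ)*a*b^3*c1*c2^2*Complex.I^3 + (2:ℂ)*a*b^3*c1^2*c2*c3*Complex.I^2 + (3:ℂ)*a^2*g*c1 + (-1:ℂ)*a^2*g^2*c2*Complex.I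 + (4:ℂ)*a^2*g^2*c1*c3 + (3:ℂ)*a^2*b*c1^2*Complex.I + (4:ℂ)*a^2*b*g*c1*c2 + (-4:ℂ)*a^2*b*g*c1*c2*Complex.I^2 + (9:ℂ)*a^2*b*g*c1^2*c3*Complex.I + (-1:ℂ)*a^2*b*g^2*c2^2*Complex.I + (3:ℂ)*a^2*b*g^2*c1*c2*c3 + (2:ℂ)*a^2*b^2*c1^2*c2*Complex.I + (-2:ℂ)*a^2*b^2*c1^2*c2*Complex.I^3 + (3:ℂ)*a^2*b^2*c1^3*c3*Complex.I^2 + (1:ℂ)*a^2*b^2*g*c1*c2^2 + (-3:ℂ)*a^2*b^2*g*c1*c2^2*Complex.I^2 + (5:ℂ)*a^2*b^2*g*c1^2*c2*c3*Complex.I + (-1:ℂ)*a^2*b^3*c1^2*c2^2*Complex.I^3 + (1:ℂ)*a^2*b^3*c1^3*c2*c3*Complex.I^2 + (3:ℂ)*a^3*g*c1^2 + (-3:ℂ)*a^3*g^2*c1*c2*Complex.I + (6:ℂ)*a^3*g^2*c1^2*c3 + (1:ℂ)*a^3*b*c1^3*Complex.I + (2:ℂ)*a^3*b*g*c1^2*c2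 + (-5:ℂ)*a^3*b*g*c1^2*c2*Complex.I^2 + (7:ℂ)*a^3*b*g*c1^3*c3*Complex.I + (-2:ℂ)*a^3*b*g^2*c1*c2^2*Complex.I + (3:ℂ)*a^3*b*g^2*c1^2*c2*c3 + (-1:ℂ)*a^3*b^2*c1^3*c2*Complex.I^3 + (1:ℂ)*a^3*b^2*c1^4*c3*Complex.I^2 + (-2:ℂ)*a^3*b^2*g*c1^2*c2^2*Complex.I^2 + (2:ℂ)*a^3*b^2*g*c1^3*c2*c3*Complex.I + (1:ℂ)*a^4*g*c1^3 + (-3:ℂ)*a^4*g^2*c1^2*c2*Complex.I + (4:ℂ)*a^4*g^2*c1^3*c3 + (-2:ℂ)*a^4*b*g*c1^3*c2*Complex.I^2 + (2:ℂ)*a^4*b*g*c1^4*c3*Complex.I + (-1:ℂ)*a^4*b*g^2*c1^2*c2^2*Complex.I + (1:ℂ)*a^4*b*g^2*c1^3*c2*c3 + (-1:ℂ)*a^5*g^2*c1^3*c2*Complex.I + (1:ℂ)*a^5*g^2*c1^4*c3) * hI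
  · -- 0,1
    linear_combination ((1:ℂ)*b*c3*sA^2*Complex.I^3 + (1:ℂ)*b^2*c2*c3*sA^2*Complex.I^3 + (1:ℂ)*a + (1:ℂ)*a*Complex.I^2 + (1:ℂ)*a*g*c3 + (1:ℂ)*a*g*c3*Complex.I^2 + (1:ℂ)*a*g*c3*sA^2*Complex.I^2 + (2:ℂ)*a*b*c2 + (2:ℂ)*a*b*c2*Complex.I^2 + (1:ℂ)*a*b*c1*c3*Complex.I + (1:ℂ)*a*b*c1*c3*Complex.I^3 + (2:ℂ)*a*b*c1*c3*sA^2*Complex.I^3 + (1:ℂ)*a*b*g*c2*c3 + (1:ℂ)*a*b*g*c2*c3*Complex.I^2 + (1:ℂ)*a*b*g*c2*c3*sA^2*Complex.I^2 + (1:ℂ)*a*b^2*c2^2 + (1:ℂ)*a*b^2*c2^2*Complex.I^2 + (1:ℂ)*a*b^2*c1*c2*c3*Complex.I + (1:ℂ)*a*b^2*c1*c2*c3*Complex.I^3 + (1:ℂ)*a*b^2*c1*c2*c3*sA^2*Complex.I^3 + (2:ℂ)*a^2*c1 + (2:ℂ)*a^2*c1*Complex.I^2 + (-1:ℂ)*a^2*g*c2*Complex.I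 + (-1:ℂ)*a^2*g*c2*Complex.I^3 + (3:ℂ)*a^2*g*c1*c3 + (3:ℂ)*a^2*g*c1*c3*Complex.I^2 + (2:ℂ)*a^2*g*c1*c3*sA^2*Complex.I^2 + (2:ℂ)*a^2*b*c1*c2 + (1:ℂ)*a^2*b*c1*c2*Complex.I^2 + (-1:ℂ)*a^2*b*c1*c2*Complex.I^4 + (2:ℂ)*a^2*b*c1^2*c3*Complex.I + (2:ℂ)*a^2*b*c1^2*c3*Complex.I^3 + (1:ℂ)*a^2*b*c1^2*c3*sA^2*Complex.I^3 + (-1:ℂ)*a^2*b*g*c2^2*Complex.I + (-1:ℂ)*a^2*b*g*c2^2*Complex.I^3 + (2:ℂ)*a^2*b*g*c1*c2*c3 + (2:ℂ)*a^2*b*g*c1*c2*c3*Complex.I^2 + (1:ℂ)*a^2*b*g*c1*c2*c3*sA^2*Complex.I^2 + (-1:ℂ)*a^2*b^2*c1*c2^2*Complex.I^2 + (-1:ℂ)*a^2*b^2*c1*c2^2*Complex.I^4 + (1:ℂ)*a^2*b^2*c1^2*c2*c3*Complex.I + (1:ℂ)*a^2*b^2*c1^2*c2*c3*Complex.I^3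 + (1:ℂ)*a^3*c1^2 + (1:ℂ)*a^3*c1^2*Complex.I^2 + (-2:ℂ)*a^3*g*c1*c2*Complex.I + (-2:ℂ)*a^3*g*c1*c2*Complex.I^3 + (3:ℂ)*a^3*g*c1^2*c3 + (3:ℂ)*a^3*g*c1^2*c3*Complex.I^2 + (1:ℂ)*a^3*g*c1^2*c3*sA^2*Complex.I^2 + (-1:ℂ)*a^3*b*c1^2*c2*Complex.I^2 + (-1:ℂ)*a^3*b*c1^2*c2*Complex.I^4 + (1:ℂ)*a^3*b*c1^3*c3*Complex.I + (1:ℂ)*a^3*b*c1^3*c3*Complex.I^3 + (-1:ℂ)*a^3*b*g*c1*c2^2*Complex.I + (-1:ℂ)*a^3*b*g*c1*c2^2*Complex.I^3 + (1:ℂ)*a^3*b*g*c1^2*c2*c3 + (1:ℂ)*a^3*b*g*c1^2*c2*c3*Complex.I^2 + (-1:ℂ)*a^4*g*c1^2*c2*Complex.I + (-1:ℂ)*a^4*g*c1^2*c2*Complex.I^3 + (1:ℂ)*a^4*g*c1^3*c3 + (1:ℂ)*a^4*g*c1^3*c3*Complex.I^2) * hA + ((-1:ℂ)*b*c3*sA^2*Complex.I^3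 + (1:ℂ)*b*c3*sA^4*Complex.I^3 + (1:ℂ)*a*sA^2 + (1:ℂ)*a*sA^2*Complex.I^2 + (1:ℂ)*a*sA^2*sB^2*Complex.I^2 + (1:ℂ)*a*g*c3*sA^2 + (1:ℂ)*a*g*c3*sA^4*Complex.I^2 + (1:ℂ)*a*b*c2*sA^2 + (1:ℂ)*a*b*c2*sA^2*Complex.I^2 + (1:ℂ)*a*b*c1*c3*sA^2*Complex.I + (-1:ℂ)*a*b*c1*c3*sA^2*Complex.I^3 + (1:ℂ)*a*b*c1*c3*sA^4*Complex.I^3 + (1:ℂ)*a^2*c1*sA^2 + (1:ℂ)*a^2*c1*sA^2*Complex.I^2 + (-1:ℂ)*a^2*g*c2*sA^2*Complex.I + (-1:ℂ)*a^2*g*c2*sA^2*Complex.I^3 + (2:ℂ)*a^2*g*c1*c3*sA^2 + (1:ℂ)*a^2*g*c1*c3*sA^4*Complex.I^2 + (-1:ℂ)*a^2*b*c1*c2*sA^2*Complex.I^2 + (-1:ℂ)*a^2*b*c1*c2*sA^2*Complex.I^4 + (1:ℂ)*a^2*b*c1^2*c3*sA^2*Complex.I + (-1:ℂ)*a^3*g*c1*c2*sA^2*Complex.I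 + (-1:ℂ)*a^3*g*c1*c2*sA^2*Complex.I^3 + (1:ℂ)*a^3*g*c1^2*c3*sA^2) * hB + ((1:ℂ)*a*sA^2*sB^2) * hC + ((1:ℂ)*a + (1:ℂ)*a*g*c3 + (2:ℂ)*a*b*c2 + (1:ℂ)*a*b*c1*c3*Complex.I + (1:ℂ)*a*b*g*c2*c3 + (1:ℂ)*a*b^2*c2^2 + (1:ℂ)*a*b^2*c1*c2*c3*Complex.I + (3:ℂ)*a^2*c1 + (-1:ℂ)*a^2*g*c2*Complex.I + (4:ℂ)*a^2*g*c1*c3 + (4:ℂ)*a^2*b*c1*c2 + (-1:ℂ)*a^2*b*c1*c2*Complex.I^2 + (3:ℂ)*a^2*b*c1^2*c3*Complex.I + (-1:ℂ)*a^2*b*g*c2^2*Complex.I + (3:ℂ)*a^2*b*g*c1*c2*c3 + (1:ℂ)*a^2*b^2*c1*c2^2 + (-1:ℂ)*a^2*b^2*c1*c2^2*Complex.I^2 + (2:ℂ)*a^2*b^2*c1^2*c2*c3*Complex.I + (3:ℂ)*a^3*c1^2 + (-3:ℂ)*a^3*g*c1*c2*Complex.I + (6:ℂ)*a^3*g*c1^2*c3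 + (2:ℂ)*a^3*b*c1^2*c2 + (-2:ℂ)*a^3*b*c1^2*c2*Complex.I^2 + (3:ℂ)*a^3*b*c1^3*c3*Complex.I + (-2:ℂ)*a^3*b*g*c1*c2^2*Complex.I + (3:ℂ)*a^3*b*g*c1^2*c2*c3 + (-1:ℂ)*a^3*b^2*c1^2*c2^2*Complex.I^2 + (1:ℂ)*a^3*b^2*c1^3*c2*c3*Complex.I + (1:ℂ)*a^4*c1^3 + (-3:ℂ)*a^4*g*c1^2*c2*Complex.I + (4:ℂ)*a^4*g*c1^3*c3 + (-1:ℂ)*a^4*b*c1^3*c2*Complex.I^2 + (1:ℂ)*a^4*b*c1^4*c3*Complex.I + (-1:ℂ)*a^4*b*g*c1^2*c2^2*Complex.I + (1:ℂ)*a^4*b*g*c1^3*c2*c3 + (-1:ℂ)*a^5*g*c1^3*c2*Complex.I + (1:ℂ)*a^5*g*c1^4*c3) * hI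
  · -- 0,2
    linear_combination ((1:ℂ) + (1:ℂ)*Complex.I^2 + (1:ℂ)*g*c3 + (1:ℂ)*g*c3*Complex.I^2 + (2:ℂ)*b*c2 + (1:ℂ)*b*c2*Complex.I^2 + (-1:ℂ)*b*c2*Complex.I^4 + (1:ℂ)*b*c1*c3*Complex.I + (1:ℂ)*b*c1*c3*Complex.I^3 + (1:ℂ)*b*g*c2*c3 + (-1:ℂ)*b*g*c2*c3*Complex.I^4 + (1:ℂ)*b^2*c2^2 + (-1:ℂ)*b^2*c2^2*Complex.I^4 + (1:ℂ)*b^2*c1*c2*c3*Complex.I + (1:ℂ)*b^2*c1*c2*c3*Complex.I^3 + (2:ℂ)*a*c1 + (2:ℂ)*a*c1*Complex.I^2 + (-1:ℂ)*a*g*c2*Complex.I + (-1:ℂ)*a*g*c2*Complex.I^3 + (3:ℂ)*a*g*c1*c3 + (3:ℂ)*a*g*c1*c3*Complex.I^2 + (2:ℂ)*a*b*c1*c2 + (-2:ℂ)*a*b*c1*c2*Complex.I^4 + (2:ℂ)*a*b*c1^2*c3*Complex.I + (2:ℂ)*a*b*c1^2*c3*Complex.I^3 + (-1:ℂ)*a*b*g*c2^2*Complex.I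 + (1:ℂ)*a*b*g*c2^2*Complex.I^5 + (2:ℂ)*a*b*g*c1*c2*c3 + (1:ℂ)*a*b*g*c1*c2*c3*Complex.I^2 + (-1:ℂ)*a*b*g*c1*c2*c3*Complex.I^4 + (-1:ℂ)*a*b^2*c1*c2^2*Complex.I^2 + (-1:ℂ)*a*b^2*c1*c2^2*Complex.I^4 + (1:ℂ)*a*b^2*c1^2*c2*c3*Complex.I + (1:ℂ)*a*b^2*c1^2*c2*c3*Complex.I^3 + (1:ℂ)*a^2*c1^2 + (1:ℂ)*a^2*c1^2*Complex.I^2 + (-2:ℂ)*a^2*g*c1*c2*Complex.I + (-2:ℂ)*a^2*g*c1*c2*Complex.I^3 + (3:ℂ)*a^2*g*c1^2*c3 + (3:ℂ)*a^2*g*c1^2*c3*Complex.I^2 + (-1:ℂ)*a^2*b*c1^2*c2*Complex.I^2 + (-1:ℂ)*a^2*b*c1^2*c2*Complex.I^4 + (1:ℂ)*a^2*b*c1^3*c3*Complex.I + (1:ℂ)*a^2*b*c1^3*c3*Complex.I^3 + (-1:ℂ)*a^2*b*g*c1*c2^2*Complex.I + (-1:ℂ)*a^2*b*g*c1*c2^2*Complex.I^3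 + (1:ℂ)*a^2*b*g*c1^2*c2*c3 + (1:ℂ)*a^2*b*g*c1^2*c2*c3*Complex.I^2 + (-1:ℂ)*a^3*g*c1^2*c2*Complex.I + (-1:ℂ)*a^3*g*c1^2*c2*Complex.I^3 + (1:ℂ)*a^3*g*c1^3*c3 + (1:ℂ)*a^3*g*c1^3*c3*Complex.I^2) * hA + ((1:ℂ)*sA^2 + (1:ℂ)*g*c3*sA^2 + (1:ℂ)*b*c2*sA^2 + (-1:ℂ)*b*c2*sA^2*Complex.I^4 + (1:ℂ)*b*c1*c3*sA^2*Complex.I + (1:ℂ)*b*c1*c3*sA^2*Complex.I^3 + (1:ℂ)*a*c1*sA^2 + (1:ℂ)*a*c1*sA^2*Complex.I^2 + (-1:ℂ)*a*g*c2*sA^2*Complex.I + (2:ℂ)*a*g*c1*c3*sA^2 + (1:ℂ)*a*g*c1*c3*sA^2*Complex.I^2 + (-1:ℂ)*a*b*c1*c2*sA^2*Complex.I^2 + (-1:ℂ)*a*b*c1*c2*sA^2*Complex.I^4 + (1:ℂ)*a*b*c1^2*c3*sA^2*Complex.I + (1:ℂ)*a*b*c1^2*c3*sA^2*Complex.I^3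 + (-1:ℂ)*a^2*g*c1*c2*sA^2*Complex.I + (-1:ℂ)*a^2*g*c1*c2*sA^2*Complex.I^3 + (1:ℂ)*a^2*g*c1^2*c3*sA^2 + (1:ℂ)*a^2*g*c1^2*c3*sA^2*Complex.I^2) * hB + ((1:ℂ)*sA^2*Complex.I^2 + (1:ℂ)*sA^2*sB^2) * hC + ((1:ℂ) + (1:ℂ)*g*c3 + (2:ℂ)*b*c2 + (-1:ℂ)*b*c2*Complex.I^2 + (1:ℂ)*b*c1*c3*Complex.I + (1:ℂ)*b*g*c2*c3 + (-1:ℂ)*b*g*c2*c3*Complex.I^2 + (1:ℂ)*b^2*c2^2 + (-1:ℂ)*b^2*c2^2*Complex.I^2 + (1:ℂ)*b^2*c1*c2*c3*Complex.I + (3:ℂ)*a*c1 + (-1:ℂ)*a*g*c2*Complex.I + (4:ℂ)*a*g*c1*c3 + (4:ℂ)*a*b*c1*c2 + (-3:ℂ)*a*b*c1*c2*Complex.I^2 + (3:ℂ)*a*b*c1^2*c3*Complex.I + (-1:ℂ)*a*b*g*c2^2*Complex.I + (1:ℂ)*a*b*g*c2^2*Complex.I^3 + (3:ℂ)*a*b*g*c1*c2*c3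 + (-2:ℂ)*a*b*g*c1*c2*c3*Complex.I^2 + (1:ℂ)*a*b^2*c1*c2^2 + (-2:ℂ)*a*b^2*c1*c2^2*Complex.I^2 + (2:ℂ)*a*b^2*c1^2*c2*c3*Complex.I + (3:ℂ)*a^2*c1^2 + (-3:ℂ)*a^2*g*c1*c2*Complex.I + (6:ℂ)*a^2*g*c1^2*c3 + (2:ℂ)*a^2*b*c1^2*c2 + (-3:ℂ)*a^2*b*c1^2*c2*Complex.I^2 + (3:ℂ)*a^2*b*c1^3*c3*Complex.I + (-2:ℂ)*a^2*b*g*c1*c2^2*Complex.I + (1:ℂ)*a^2*b*g*c1*c2^2*Complex.I^3 + (3:ℂ)*a^2*b*g*c1^2*c2*c3 + (-1:ℂ)*a^2*b*g*c1^2*c2*c3*Complex.I^2 + (-1:ℂ)*a^2*b^2*c1^2*c2^2*Complex.I^2 + (1:ℂ)*a^2*b^2*c1^3*c2*c3*Complex.I + (1:ℂ)*a^3*c1^3 + (-3:ℂ)*a^3*g*c1^2*c2*Complex.I + (4:ℂ)*a^3*g*c1^3*c3 + (-1:ℂ)*a^3*b*c1^3*c2*Complex.I^2 + (1:ℂ)*a^3*b*c1^4*c3*Complex.I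 + (-1:ℂ)*a^3*b*g*c1^2*c2^2*Complex.I + (1:ℂ)*a^3*b*g*c1^3*c2*c3 + (-1:ℂ)*a^4*g*c1^3*c2*Complex.I + (1:ℂ)*a^4*g*c1^4*c3) * hI
  · -- 1,0
    linear_combination ((1:ℂ)*g + (1:ℂ)*g^2*c3 + (2:ℂ)*b*g*c2 + (1:ℂ)*b*g*c1*c3*Complex.I + (1:ℂ)*b*g^2*c2*c3 + (1:ℂ)*b^2*g*c2^2 + (1:ℂ)*b^2*g*c1*c2*c3*Complex.I + (2:ℂ)*a*g*c1 + (-1:ℂ)*a*g^2*c2*Complex.I + (3:ℂ)*a*g^2*c1*c3 + (2:ℂ)*a*b*g*c1*c2 + (-1:ℂ)*a*b*g*c1*c2*Complex.I^2 + (2:ℂ)*a*b*g*c1^2*c3*Complex.I + (-1:ℂ)*a*b*g^2*c2^2*Complex.I + (2:ℂ)*a*b*g^2*c1*c2*c3 + (-1:ℂ)*a*b^2*g*c1*c2^2*Complex.I^2 + (1:ℂ)*a*b^2*g*c1^2*c2*c3*Complex.I + (1:ℂ)*a^2*g*c1^2 + (-2:ℂ)*a^2*g^2*c1*c2*Complex.I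 + (3:ℂ)*a^2*g^2*c1^2*c3 + (-1:ℂ)*a^2*b*g*c1^2*c2*Complex.I^2 + (1:ℂ)*a^2*b*g*c1^3*c3*Complex.I + (-1:ℂ)*a^2*b*g^2*c1*c2^2*Complex.I + (1:ℂ)*a^2*b*g^2*c1^2*c2*c3 + (-1:ℂ)*a^3*g^2*c1^2*c2*Complex.I + (1:ℂ)*a^3*g^2*c1^3*c3) * hA + ((1:ℂ)*g*Complex.I^2 + (1:ℂ)*g*sA^2 + (1:ℂ)*g^2*c3*Complex.I^2 + (1:ℂ)*g^2*c3*sA^2 + (1:ℂ)*b*g*c2*Complex.I^2 + (1:ℂ)*b*g*c2*sA^2 + (1:ℂ)*b*g*c1*c3*Complex.I^3 + (1:ℂ)*b*g*c1*c3*sA^2*Complex.I + (2:ℂ)*a*g*c1*Complex.I^2 + (1:ℂ)*a*g*c1*sA^2 + (-1:ℂ)*a*g^2*c2*Complex.I^3 + (-1:ℂ)*a*g^2*c2*sA^2*Complex.I + (3:ℂ)*a*g^2*c1*c3*Complex.I^2 + (2:ℂ)*a*g^2*c1*c3*sA^2 + (1:ℂ)*a*b*g*c1*c2*Complex.I^2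 + (-1:ℂ)*a*b*g*c1*c2*Complex.I^4 + (-1:ℂ)*a*b*g*c1*c2*sA^2*Complex.I^2 + (2:ℂ)*a*b*g*c1^2*c3*Complex.I^3 + (1:ℂ)*a*b*g*c1^2*c3*sA^2*Complex.I + (1:ℂ)*a^2*g*c1^2*Complex.I^2 + (-2:ℂ)*a^2*g^2*c1*c2*Complex.I^3 + (-1:ℂ)*a^2*g^2*c1*c2*sA^2*Complex.I + (3:ℂ)*a^2*g^2*c1^2*c3*Complex.I^2 + (1:ℂ)*a^2*g^2*c1^2*c3*sA^2 + (-1:ℂ)*a^2*b*g*c1^2*c2*Complex.I^4 + (1:ℂ)*a^2*b*g*c1^3*c3*Complex.I^3 + (-1:ℂ)*a^3*g^2*c1^2*c2*Complex.I^3 + (1:ℂ)*a^3*g^2*c1^3*c3*Complex.I^2) * hB + ((1:ℂ)*g*sB^2*Complex.I^2 + (1:ℂ)*g*sA^2*sB^2 + (1:ℂ)*a*g*c1*sB^2*Complex.I^2) * hC + ((1:ℂ)*g + (1:ℂ)*g^2*c3 + (2:ℂ)*b*g*c2 + (1:ℂ)*b*g*c1*c3*Complex.I + (1:ℂ)*b*g^2*c2*c3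 + (1:ℂ)*b^2*g*c2^2 + (1:ℂ)*b^2*g*c1*c2*c3*Complex.I + (3:ℂ)*a*g*c1 + (-1:ℂ)*a*g^2*c2*Complex.I + (4:ℂ)*a*g^2*c1*c3 + (4:ℂ)*a*b*g*c1*c2 + (-1:ℂ)*a*b*g*c1*c2*Complex.I^2 + (3:ℂ)*a*b*g*c1^2*c3*Complex.I + (-1:ℂ)*a*b*g^2*c2^2*Complex.I + (3:ℂ)*a*b*g^2*c1*c2*c3 + (1:ℂ)*a*b^2*g*c1*c2^2 + (-1:ℂ)*a*b^2*g*c1*c2^2*Complex.I^2 + (2:ℂ)*a*b^2*g*c1^2*c2*c3*Complex.I + (3:ℂ)*a^2*g*c1^2 + (-3:ℂ)*a^2*g^2*c1*c2*Complex.I + (6:ℂ)*a^2*g^2*c1^2*c3 + (2:ℂ)*a^2*b*g*c1^2*c2 + (-2:ℂ)*a^2*b*g*c1^2*c2*Complex.I^2 + (3:ℂ)*a^2*b*g*c1^3*c3*Complex.I + (-2:ℂ)*a^2*b*g^2*c1*c2^2*Complex.I + (3:ℂ)*a^2*b*g^2*c1^2*c2*c3 + (-1:ℂ)*a^2*b^2*g*c1^2*c2^2*Complex.I^2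 + (1:ℂ)*a^2*b^2*g*c1^3*c2*c3*Complex.I + (1:ℂ)*a^3*g*c1^3 + (-3:ℂ)*a^3*g^2*c1^2*c2*Complex.I + (4:ℂ)*a^3*g^2*c1^3*c3 + (-1:ℂ)*a^3*b*g*c1^3*c2*Complex.I^2 + (1:ℂ)*a^3*b*g*c1^4*c3*Complex.I + (-1:ℂ)*a^3*b*g^2*c1^2*c2^2*Complex.I + (1:ℂ)*a^3*b*g^2*c1^3*c2*c3 + (-1:ℂ)*a^4*g^2*c1^3*c2*Complex.I + (1:ℂ)*a^4*g^2*c1^4*c3) * hI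
  · -- 1,1
    linear_combination ((1:ℂ) + (1:ℂ)*Complex.I^2 + (1:ℂ)*g*c3 + (1:ℂ)*g*c3*Complex.I^2 + (1:ℂ)*g*c3*sA^2*Complex.I^2 + (2:ℂ)*b*c2 + (2:ℂ)*b*c2*Complex.I^2 + (1:ℂ)*b*c1*c3*Complex.I + (1:ℂ)*b*c1*c3*Complex.I^3 + (1:ℂ)*b*g*c2*c3 + (1:ℂ)*b*g*c2*c3*Complex.I^2 + (1:ℂ)*b*g*c2*c3*sA^2*Complex.I^2 + (1:ℂ)*b^2*c2^2 + (1:ℂ)*b^2*c2^2*Complex.I^2 + (1:ℂ)*b^2*c1*c2*c3*Complex.I + (1:ℂ)*b^2*c1*c2*c3*Complex.I^3 + (2:ℂ)*a*c1 + (2:ℂ)*a*c1*Complex.I^2 + (-1:ℂ)*a*g*c2*Complex.I + (-1:ℂ)*a*g*c2*Complex.I^3 + (3:ℂ)*a*g*c1*c3 + (3:ℂ)*a*g*c1*c3*Complex.I^2 + (2:ℂ)*a*g*c1*c3*sA^2*Complex.I^2 + (2:ℂ)*a*b*c1*c2 + (1:ℂ)*a*b*c1*c2*Complex.I^2 + (-1:ℂ)*a*b*c1*c2*Complex.I^4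 + (2:ℂ)*a*b*c1^2*c3*Complex.I + (2:ℂ)*a*b*c1^2*c3*Complex.I^3 + (-1:ℂ)*a*b*g*c2^2*Complex.I + (-1:ℂ)*a*b*g*c2^2*Complex.I^3 + (2:ℂ)*a*b*g*c1*c2*c3 + (2:ℂ)*a*b*g*c1*c2*c3*Complex.I^2 + (1:ℂ)*a*b*g*c1*c2*c3*sA^2*Complex.I^2 + (-1:ℂ)*a*b^2*c1*c2^2*Complex.I^2 + (-1:ℂ)*a*b^2*c1*c2^2*Complex.I^4 + (1:ℂ)*a*b^2*c1^2*c2*c3*Complex.I + (1:ℂ)*a*b^2*c1^2*c2*c3*Complex.I^3 + (1:ℂ)*a^2*c1^2 + (1:ℂ)*a^2*c1^2*Complex.I^2 + (-2:ℂ)*a^2*g*c1*c2*Complex.I + (-2:ℂ)*a^2*g*c1*c2*Complex.I^3 + (3:ℂ)*a^2*g*c1^2*c3 + (3:ℂ)*a^2*g*c1^2*c3*Complex.I^2 + (1:ℂ)*a^2*g*c1^2*c3*sA^2*Complex.I^2 + (-1:ℂ)*a^2*b*c1^2*c2*Complex.I^2 + (-1:ℂ)*a^2*b*c1^2*c2*Complex.I^4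 + (1:ℂ)*a^2*b*c1^3*c3*Complex.I + (1:ℂ)*a^2*b*c1^3*c3*Complex.I^3 + (-1:ℂ)*a^2*b*g*c1*c2^2*Complex.I + (-1:ℂ)*a^2*b*g*c1*c2^2*Complex.I^3 + (1:ℂ)*a^2*b*g*c1^2*c2*c3 + (1:ℂ)*a^2*b*g*c1^2*c2*c3*Complex.I^2 + (-1:ℂ)*a^3*g*c1^2*c2*Complex.I + (-1:ℂ)*a^3*g*c1^2*c2*Complex.I^3 + (1:ℂ)*a^3*g*c1^3*c3 + (1:ℂ)*a^3*g*c1^3*c3*Complex.I^2) * hA + ((1:ℂ)*sA^2 + (1:ℂ)*sA^2*Complex.I^2 + (1:ℂ)*sA^2*sB^2*Complex.I^2 + (1:ℂ)*g*c3*sA^2 + (1:ℂ)*g*c3*sA^4*Complex.I^2 + (1:ℂ)*b*c2*sA^2 + (1:ℂ)*b*c2*sA^2*Complex.I^2 + (1:ℂ)*b*c1*c3*sA^2*Complex.I + (1:ℂ)*b*c1*c3*sA^2*Complex.I^3 + (1:ℂ)*a*c1*sA^2 + (1:ℂ)*a*c1*sA^2*Complex.I^2 + (-1:ℂ)*a*g*c2*sA^2*Complex.I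 + (-1:ℂ)*a*g*c2*sA^2*Complex.I^3 + (2:ℂ)*a*g*c1*c3*sA^2 + (1:ℂ)*a*g*c1*c3*sA^4*Complex.I^2 + (-1:ℂ)*a*b*c1*c2*sA^2*Complex.I^2 + (-1:ℂ)*a*b*c1*c2*sA^2*Complex.I^4 + (1:ℂ)*a*b*c1^2*c3*sA^2*Complex.I + (1:ℂ)*a*b*c1^2*c3*sA^2*Complex.I^3 + (-1:ℂ)*a^2*g*c1*c2*sA^2*Complex.I + (-1:ℂ)*a^2*g*c1*c2*sA^2*Complex.I^3 + (1:ℂ)*a^2*g*c1^2*c3*sA^2) * hB + ((1:ℂ)*sA^2*sB^2) * hC + ((1:ℂ) + (1:ℂ)*g*c3 + (2:ℂ)*b*c2 + (1:ℂ)*b*c1*c3*Complex.I + (1:ℂ)*b*g*c2*c3 + (1:ℂ)*b^2*c2^2 + (1:ℂ)*b^2*c1*c2*c3*Complex.I + (3:ℂ)*a*c1 + (-1:ℂ)*a*g*c2*Complex.I + (4:ℂ)*a*g*c1*c3 + (4:ℂ)*a*b*c1*c2 + (-1:ℂ)*a*b*c1*c2*Complex.I^2 + (3:ℂ)*a*b*c1^2*c3*Complex.I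 + (-1:ℂ)*a*b*g*c2^2*Complex.I + (3:ℂ)*a*b*g*c1*c2*c3 + (1:ℂ)*a*b^2*c1*c2^2 + (-1:ℂ)*a*b^2*c1*c2^2*Complex.I^2 + (2:ℂ)*a*b^2*c1^2*c2*c3*Complex.I + (3:ℂ)*a^2*c1^2 + (-3:ℂ)*a^2*g*c1*c2*Complex.I + (6:ℂ)*a^2*g*c1^2*c3 + (2:ℂ)*a^2*b*c1^2*c2 + (-2:ℂ)*a^2*b*c1^2*c2*Complex.I^2 + (3:ℂ)*a^2*b*c1^3*c3*Complex.I + (-2:ℂ)*a^2*b*g*c1*c2^2*Complex.I + (3:ℂ)*a^2*b*g*c1^2*c2*c3 + (-1:ℂ)*a^2*b^2*c1^2*c2^2*Complex.I^2 + (1:ℂ)*a^2*b^2*c1^3*c2*c3*Complex.I + (1:ℂ)*a^3*c1^3 + (-3:ℂ)*a^3*g*c1^2*c2*Complex.I + (4:ℂ)*a^3*g*c1^3*c3 + (-1:ℂ)*a^3*b*c1^3*c2*Complex.I^2 + (1:ℂ)*a^3*b*c1^4*c3*Complex.I + (-1:ℂ)*a^3*b*g*c1^2*c2^2*Complex.I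 + (1:ℂ)*a^3*b*g*c1^3*c2*c3 + (-1:ℂ)*a^4*g*c1^3*c2*Complex.I + (1:ℂ)*a^4*g*c1^4*c3) * hI
  · -- 1,2
    linear_combination ((1:ℂ)*b*g*c1*c2*c3*Complex.I^2 + (1:ℂ)*b*g*c1*c2*c3*Complex.I^4 + (-1:ℂ)*a*b*g*c1*c2^2*Complex.I^3 + (-1:ℂ)*a*b*g*c1*c2^2*Complex.I^5 + (1:ℂ)*a*b*g*c1^2*c2*c3*Complex.I^2 + (1:ℂ)*a*b*g*c1^2*c2*c3*Complex.I^4) * hA + ((1:ℂ)*c1*sA^2*Complex.I^2 + (1:ℂ)*g*c1*c3*sA^2*Complex.I^2 + (-1:ℂ)*a*g*c1*c2*sA^2*Complex.I^3 + (1:ℂ)*a*g*c1^2*c3*sA^2*Complex.I^2) * hB + ((-1:ℂ)*c1*sA^2*Complex.I^2) * hC + ((1:ℂ)*b*g*c1*c2*c3*Complex.I^2 + (-1:ℂ)*a*b*g*c1*c2^2*Complex.I^3 + (2:ℂ)*a*b*g*c1^2*c2*c3*Complex.I^2 + (-1:ℂ)*a^2*b*g*c1^2*c2^2*Complex.I^3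 + (1:ℂ)*a^2*b*g*c1^3*c2*c3*Complex.I^2) * hI
  · -- 2,0
    linear_combination ((1:ℂ) + (1:ℂ)*Complex.I^2 + (1:ℂ)*g*c3 + (1:ℂ)*g*c3*Complex.I^2 + (2:ℂ)*b*c2 + (2:ℂ)*b*c2*Complex.I^2 + (1:ℂ)*b*c1*c3*Complex.I + (1:ℂ)*b*c1*c3*Complex.I^3 + (1:ℂ)*b*g*c2*c3 + (1:ℂ)*b*g*c2*c3*Complex.I^2 + (1:ℂ)*b^2*c2^2 + (1:ℂ)*b^2*c2^2*Complex.I^2 + (1:ℂ)*b^2*c1*c2*c3*Complex.I + (1:ℂ)*b^2*c1*c2*c3*Complex.I^3 + (2:ℂ)*a*c1 + (2:ℂ)*a*c1*Complex.I^2 + (-1:ℂ)*a*g*c2*Complex.I + (-1:ℂ)*a*g*c2*Complex.I^3 + (3:ℂ)*a*g*c1*c3 + (3:ℂ)*a*g*c1*c3*Complex.I^2 + (2:ℂ)*a*b*c1*c2 + (1:ℂ)*a*b*c1*c2*Complex.I^2 + (-1:ℂ)*a*b*c1*c2*Complex.I^4 + (2:ℂ)*a*b*c1^2*c3*Complex.I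 + (2:ℂ)*a*b*c1^2*c3*Complex.I^3 + (-1:ℂ)*a*b*g*c2^2*Complex.I + (-1:ℂ)*a*b*g*c2^2*Complex.I^3 + (2:ℂ)*a*b*g*c1*c2*c3 + (2:ℂ)*a*b*g*c1*c2*c3*Complex.I^2 + (-1:ℂ)*a*b^2*c1*c2^2*Complex.I^2 + (-1:ℂ)*a*b^2*c1*c2^2*Complex.I^4 + (1:ℂ)*a*b^2*c1^2*c2*c3*Complex.I + (1:ℂ)*a*b^2*c1^2*c2*c3*Complex.I^3 + (1:ℂ)*a^2*c1^2 + (1:ℂ)*a^2*c1^2*Complex.I^2 + (-2:ℂ)*a^2*g*c1*c2*Complex.I + (-2:ℂ)*a^2*g*c1*c2*Complex.I^3 + (3:ℂ)*a^2*g*c1^2*c3 + (3:ℂ)*a^2*g*c1^2*c3*Complex.I^2 + (-1:ℂ)*a^2*b*c1^2*c2*Complex.I^2 + (-1:ℂ)*a^2*b*c1^2*c2*Complex.I^4 + (1:ℂ)*a^2*b*c1^3*c3*Complex.I + (1:ℂ)*a^2*b*c1^3*c3*Complex.I^3 + (-1:ℂ)*a^2*b*g*c1*c2^2*Complex.I +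 (-1:ℂ)*a^2*b*g*c1*c2^2*Complex.I^3 + (1:ℂ)*a^2*b*g*c1^2*c2*c3 + (1:ℂ)*a^2*b*g*c1^2*c2*c3*Complex.I^2 + (-1:ℂ)*a^3*g*c1^2*c2*Complex.I + (-1:ℂ)*a^3*g*c1^2*c2*Complex.I^3 + (1:ℂ)*a^3*g*c1^3*c3 + (1:ℂ)*a^3*g*c1^3*c3*Complex.I^2) * hA + ((1:ℂ)*sA^2 + (1:ℂ)*sA^2*Complex.I^2 + (1:ℂ)*g*c3*sA^2 + (1:ℂ)*g*c3*sA^2*Complex.I^2 + (1:ℂ)*b*c2*sA^2 + (1:ℂ)*b*c2*sA^2*Complex.I^2 + (1:ℂ)*b*c1*c3*sA^2*Complex.I + (1:ℂ)*b*c1*c3*sA^2*Complex.I^3 + (1:ℂ)*a*c1*sA^2 + (1:ℂ)*a*c1*sA^2*Complex.I^2 + (-1:ℂ)*a*g*c2*sA^2*Complex.I + (-1:ℂ)*a*g*c2*sA^2*Complex.I^3 + (2:ℂ)*a*g*c1*c3*sA^2 + (2:ℂ)*a*g*c1*c3*sA^2*Complex.I^2 + (-1:ℂ)*a*b*c1*c2*sA^2*Complex.I^2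 + (-1:ℂ)*a*b*c1*c2*sA^2*Complex.I^4 + (1:ℂ)*a*b*c1^2*c3*sA^2*Complex.I + (1:ℂ)*a*b*c1^2*c3*sA^2*Complex.I^3 + (-1:ℂ)*a^2*g*c1*c2*sA^2*Complex.I + (-1:ℂ)*a^2*g*c1*c2*sA^2*Complex.I^3 + (1:ℂ)*a^2*g*c1^2*c3*sA^2 + (1:ℂ)*a^2*g*c1^2*c3*sA^2*Complex.I^2) * hB + ((1:ℂ)*sA^2*sB^2 + (1:ℂ)*sA^2*sB^2*Complex.I^2) * hC + ((1:ℂ) + (1:ℂ)*g*c3 + (2:ℂ)*b*c2 + (1:ℂ)*b*c1*c3*Complex.I + (1:ℂ)*b*g*c2*c3 + (1:ℂ)*b^2*c2^2 + (1:ℂ)*b^2*c1*c2*c3*Complex.I + (3:ℂ)*a*c1 + (-1:ℂ)*a*g*c2*Complex.I + (4:ℂ)*a*g*c1*c3 + (4:ℂ)*a*b*c1*c2 + (-1:ℂ)*a*b*c1*c2*Complex.I^2 + (3:ℂ)*a*b*c1^2*c3*Complex.I + (-1:ℂ)*a*b*g*c2^2*Complex.I + (3:ℂ)*a*b*g*c1*c2*c3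 + (1:ℂ)*a*b^2*c1*c2^2 + (-1:ℂ)*a*b^2*c1*c2^2*Complex.I^2 + (2:ℂ)*a*b^2*c1^2*c2*c3*Complex.I + (3:ℂ)*a^2*c1^2 + (-3:ℂ)*a^2*g*c1*c2*Complex.I + (6:ℂ)*a^2*g*c1^2*c3 + (2:ℂ)*a^2*b*c1^2*c2 + (-2:ℂ)*a^2*b*c1^2*c2*Complex.I^2 + (3:ℂ)*a^2*b*c1^3*c3*Complex.I + (-2:ℂ)*a^2*b*g*c1*c2^2*Complex.I + (3:ℂ)*a^2*b*g*c1^2*c2*c3 + (-1:ℂ)*a^2*b^2*c1^2*c2^2*Complex.I^2 + (1:ℂ)*a^2*b^2*c1^3*c2*c3*Complex.I + (1:ℂ)*a^3*c1^3 + (-3:ℂ)*a^3*g*c1^2*c2*Complex.I + (4:ℂ)*a^3*g*c1^3*c3 + (-1:ℂ)*a^3*b*c1^3*c2*Complex.I^2 + (1:ℂ)*a^3*b*c1^4*c3*Complex.I + (-1:ℂ)*a^3*b*g*c1^2*c2^2*Complex.I + (1:ℂ)*a^3*b*g*c1^3*c2*c3 + (-1:ℂ)*a^4*g*c1^3*c2*Complex.I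 + (1:ℂ)*a^4*g*c1^4*c3) * hI
  · -- 2,1
    linear_combination ((1:ℂ)*c3*sA^4*Complex.I^2 + (1:ℂ)*b*c2*c3*sA^4*Complex.I^2 + (1:ℂ)*a*c1*c3*sA^4*Complex.I^2) * hA + ((-1:ℂ)*c3*sA^4*Complex.I^2 + (1:ℂ)*c3*sA^6*Complex.I^2 + (-1:ℂ)*a*c1*c3*sA^4*Complex.I^2) * hB
  · -- 2,2
    linear_combination ((-1:ℂ)*c2*Complex.I + (-1:ℂ)*c2*Complex.I^3 + (-1:ℂ)*c2*sA^2*Complex.I^3 + (-1:ℂ)*g*c2*c3*Complex.I + (-1:ℂ)*g*c2*c3*Complex.I^3 + (-1:ℂ)*g*c2*c3*sA^2*Complex.I^3 + (-1:ℂ)*b*c2^2*Complex.I + (-1:ℂ)*b*c2^2*Complex.I^3 + (-1:ℂ)*b*c2^2*sA^2*Complex.I^3 + (1:ℂ)*b*c1*c2*c3*sA^2*Complex.I^2 + (-1:ℂ)*a*c1*c2*Complex.I + (-1:ℂ)*a*c1*c2*Complex.I^3 + (1:ℂ)*a*g*c2^2*Complex.I^2 + (1:ℂ)*a*g*c2^2*Complex.I^4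 + (1:ℂ)*a*g*c2^2*sA^2*Complex.I^4 + (-2:ℂ)*a*g*c1*c2*c3*Complex.I + (-2:ℂ)*a*g*c1*c2*c3*Complex.I^3 + (-1:ℂ)*a*g*c1*c2*c3*sA^2*Complex.I^3 + (1:ℂ)*a^2*g*c1*c2^2*Complex.I^2 + (1:ℂ)*a^2*g*c1*c2^2*Complex.I^4 + (-1:ℂ)*a^2*g*c1^2*c2*c3*Complex.I + (-1:ℂ)*a^2*g*c1^2*c2*c3*Complex.I^3) * hA + ((-1:ℂ)*c2*sA^4*Complex.I^3 + (1:ℂ)*c1*c3*sA^4*Complex.I^2) * hB + ((-1:ℂ)*c2*sA^2*Complex.I) * hC + ((-1:ℂ)*c2*Complex.I + (-1:ℂ)*g*c2*c3*Complex.I + (-1:ℂ)*b*c2^2*Complex.I + (-2:ℂ)*a*c1*c2*Complex.I + (1:ℂ)*a*g*c2^2*Complex.I^2 + (-3:ℂ)*a*g*c1*c2*c3*Complex.I + (-1:ℂ)*a*b*c1*c2^2*Complex.I + (-1:ℂ)*a^2*c1^2*c2*Complex.I + (2:ℂ)*a^2*g*c1*c2^2*Complex.I^2 + (-3:ℂ)*a^2*g*c1^2*c2*c3*Complex.I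 + (1:ℂ)*a^3*g*c1^2*c2^2*Complex.I^2 + (-1:ℂ)*a^3*g*c1^3*c2*c3*Complex.I) * hI

set_option maxHeartbeats 3200000 in
theorem sl3_length_three_change_of_variables (ζ₁ ζ₂ ζ₃ : ℂ) :
    ∃ d : Matrix (Fin 3) (Fin 3) ℂ,
      (∀ i j : Fin 3, j < i → d i j = 0) ∧
      (∀ i : Fin 3, ∃ r : ℝ, 0 < r ∧ d i i = (r : ℂ)) ∧
      n12 ζ₁ * sdot1 * n23 ζ₂ * sdot2 * n12 ζ₃ * sdot1 =
        kappa1 ζ₁ *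
        kappa2 (ζ₂ / (Real.sqrt (1 + ‖ζ₁‖ ^ 2) : ℂ)) *
        kappa1 ((Complex.I * (starRingEnd ℂ ζ₁) * ζ₂ + ζ₃ * (1 + ‖ζ₁‖ ^ 2)) /
          (Real.sqrt (1 + ‖ζ₁‖ ^ 2 + ‖ζ₂‖ ^ 2) : ℂ)) * d := by
  have habs : ∀ z : ℂ, ((‖z‖ : ℝ) : ℂ) ^ 2 = z * (starRingEnd ℂ z) := by
    intro z
    rw [← Complex.ofReal_pow, Complex.sq_norm]
    exact (Complex.mul_conj z).symm
  set c1 : ℂ := starRingEnd ℂ ζ₁ with hc1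
  set c2 : ℂ := starRingEnd ℂ ζ₂ with hc2
  set c3 : ℂ := starRingEnd ℂ ζ₃ with hc3
  have hA0 : (0:ℝ) < 1 + ‖ζ₁‖ ^ 2 := by positivity
  have hB0 : (0:ℝ) < 1 + ‖ζ₁‖ ^ 2 + ‖ζ₂‖ ^ 2 := by positivity
  set Nv : ℂ := Complex.I * c1 * ζ₂ + ζ₃ * (1 + ‖ζ₁‖ ^ 2) with hNv
  have hC0 : (0:ℝ) < 1 + ‖ζ₁‖ ^ 2 + ‖ζ₂‖ ^ 2 + ‖Nv‖ ^ 2 := by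
    positivity
  set sA : ℝ := Real.sqrt (1 + ‖ζ₁‖ ^ 2) with hsA
  set sB : ℝ := Real.sqrt (1 + ‖ζ₁‖ ^ 2 + ‖ζ₂‖ ^ 2) with hsB
  set sC : ℝ := Real.sqrt (1 + ‖ζ₁‖ ^ 2 + ‖ζ₂‖ ^ 2 + ‖Nv‖ ^ 2)
    with hsC
  have hsA0 : 0 < sA := Real.sqrt_pos.mpr hA0
  have hsB0 : 0 < sB := Real.sqrt_pos.mpr hB0
  have hsC0 : 0 < sC := Real.sqrt_pos.mpr hC0
  have hsA2 : sA ^ 2 = 1 + ‖ζ₁‖ ^ 2 := Real.sq_sqrt hA0.le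
  have hsB2 : sB ^ 2 = 1 + ‖ζ₁‖ ^ 2 + ‖ζ₂‖ ^ 2 := Real.sq_sqrt hB0.le
  have hsC2 : sC ^ 2 = 1 + ‖ζ₁‖ ^ 2 + ‖ζ₂‖ ^ 2 + ‖Nv‖ ^ 2 :=
    Real.sq_sqrt hC0.le
  have hsAne : (sA : ℂ) ≠ 0 := Complex.ofReal_ne_zero.mpr hsA0.ne'
  have hsBne : (sB : ℂ) ≠ 0 := Complex.ofReal_ne_zero.mpr hsB0.ne'
  have hsCne : (sC : ℂ) ≠ 0 := Complex.ofReal_ne_zero.mpr hsC0.ne'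
  -- complexified versions of the squared norms
  have cA : ((sA : ℝ) : ℂ) ^ 2 = 1 + ζ₁ * c1 := by
    rw [← Complex.ofReal_pow, hsA2]
    push_cast
    rw [habs ζ₁]
  have cB : ((sB : ℝ) : ℂ) ^ 2 = 1 + ζ₁ * c1 + ζ₂ * c2 := by
    rw [← Complex.ofReal_pow, hsB2]
    push_cast
    rw [habs ζ₁, habs ζ₂]
  have hNveq : Nv = Complex.I * c1 * ζ₂ + ζ₃ * (1 + ζ₁ * c1) := by
    rw [hNv]
    congr 1
    congr 1
    push_cast
    rw [habs ζ₁]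
  have hNvconj : starRingEnd ℂ Nv = -Complex.I * ζ₁ * c2 + c3 * (1 + ζ₁ * c1) := by
    rw [hNveq, hc1, hc2, hc3]
    simp only [map_add, _root_.map_mul, _root_.map_one, Complex.conj_I, Complex.conj_conj]
    ring
  have cC : ((sC : ℝ) : ℂ) ^ 2 = 1 + ζ₁ * c1 + ζ₂ * c2 +
      (Complex.I * c1 * ζ₂ + ζ₃ * (1 + ζ₁ * c1)) * (-Complex.I * ζ₁ * c2 + c3 * (1 + ζ₁ * c1)) := by
    rw [← Complex.ofReal_pow, hsC2]
    push_cast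
    rw [habs ζ₁, habs ζ₂, habs Nv, hNvconj, ← hNveq]
  -- aFun values
  have ha1 : (aFun ζ₁ : ℝ) = sA⁻¹ := by rw [aFun_eq, hsA]
  have habs2 : ‖ζ₂ / (sA : ℂ)‖ ^ 2 =
      ‖ζ₂‖ ^ 2 / (1 + ‖ζ₁‖ ^ 2) := by
    rw [norm_div, Complex.norm_real, Real.norm_eq_abs, abs_of_pos hsA0, div_pow, hsA2]
  have ha2 : (aFun (ζ₂ / (sA : ℂ)) : ℝ) = sA / sB := by
    rw [aFun_eq, habs2]
    rw [show 1 + ‖ζ₂‖ ^ 2 / (1 + ‖ζ₁‖ ^ 2) =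
      (1 + ‖ζ₁‖ ^ 2 + ‖ζ₂‖ ^ 2) / (1 + ‖ζ₁‖ ^ 2) by
        field_simp]
    rw [Real.sqrt_div hB0.le, ← hsA, ← hsB, inv_div]
  have habs3 : ‖Nv / (sB : ℂ)‖ ^ 2 =
      ‖Nv‖ ^ 2 / (1 + ‖ζ₁‖ ^ 2 + ‖ζ₂‖ ^ 2) := by
    rw [norm_div, Complex.norm_real, Real.norm_eq_abs, abs_of_pos hsB0, div_pow, hsB2]
  have ha3 : (aFun (Nv / (sB : ℂ)) : ℝ) = sB / sC := by
    rw [aFun_eq, habs3]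
    rw [show 1 + ‖Nv‖ ^ 2 / (1 + ‖ζ₁‖ ^ 2 + ‖ζ₂‖ ^ 2) =
      (1 + ‖ζ₁‖ ^ 2 + ‖ζ₂‖ ^ 2 + ‖Nv‖ ^ 2) /
        (1 + ‖ζ₁‖ ^ 2 + ‖ζ₂‖ ^ 2) by field_simp]
    rw [Real.sqrt_div hC0.le, ← hsB, ← hsC, inv_div]
  have hconj2 : starRingEnd ℂ (ζ₂ / (sA : ℂ)) = c2 / (sA : ℂ) := by
    rw [map_div₀, Complex.conj_ofReal, hc2]
  have hconj3 : starRingEnd ℂ (Nv / (sB : ℂ)) =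
      (-Complex.I * ζ₁ * c2 + c3 * (1 + ζ₁ * c1)) / (sB : ℂ) := by
    rw [map_div₀, Complex.conj_ofReal, hNvconj]
  -- the three unitary factors, denominators cleared
  have hk1 : kappa1 ζ₁ = ((sA : ℝ) : ℂ)⁻¹ •
      !![Complex.I*ζ₁, Complex.I, 0; Complex.I, -Complex.I*c1, 0; 0, 0, (sA:ℂ)] := by
    ext i j
    fin_cases i <;> fin_cases j <;>
      simp [kappa1, ha1, hc1, Matrix.vecHead, Matrix.vecTail] <;> field_simp <;> ring
  have hk2 : kappa2 (ζ₂ / (sA : ℂ)) = ((sB : ℝ) : ℂ)⁻¹ •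
      !![(sB:ℂ), 0, 0; 0, Complex.I*ζ₂, Complex.I*(sA:ℂ);
         0, Complex.I*(sA:ℂ), -Complex.I*c2] := by
    ext i j
    fin_cases i <;> fin_cases j <;>
      simp [kappa2, ha2, hconj2, Matrix.vecHead, Matrix.vecTail] <;> field_simp <;> ring
  have hk3 : kappa1 (Nv / (sB : ℂ)) = ((sC : ℝ) : ℂ)⁻¹ •
      !![Complex.I*(Complex.I*c1*ζ₂ + ζ₃*(1+ζ₁*c1)), Complex.I*(sB:ℂ), 0;
         Complex.I*(sB:ℂ), -Complex.I*(-Complex.I*ζ₁*c2 + c3*(1+ζ₁*c1)), 0;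
         0, 0, (sC:ℂ)] := by
    rw [← hNveq]
    ext i j
    fin_cases i <;> fin_cases j <;>
      simp [kappa1, ha3, hconj3, hNvconj, Matrix.vecHead, Matrix.vecTail] <;> field_simp <;> ring
  -- the upper-triangular factor
  refine ⟨(((sA*sB*sC)⁻¹ : ℝ) : ℂ) •
    !![(sB:ℂ)*(sC:ℂ)^2, (sB:ℂ)*(sA:ℂ)^2*((sA:ℂ)^2*c3 - Complex.I*ζ₁*c2),
         (sB:ℂ)*(sA:ℂ)^2*(c1*c3 - Complex.I*c2);
       0, (sA:ℂ)^2*(sB:ℂ)^2, (sA:ℂ)^2*(c1 + Complex.I*ζ₃*c2);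
       0, 0, (sA:ℂ)*(sC:ℂ)], ?_, ?_, ?_⟩
  · intro i j hij
    fin_cases i <;> fin_cases j <;> first
      | exact absurd hij (by decide)
      | simp [Matrix.vecHead, Matrix.vecTail]
  · intro i
    fin_cases i
    · exact ⟨(sA*sB*sC)⁻¹ * (sB*sC^2), by positivity, by simp [Matrix.vecHead, Matrix.vecTail] <;> push_cast <;> ring_nf⟩
    · exact ⟨(sA*sB*sC)⁻¹ * (sA^2*sB^2), by positivity, by simp [Matrix.vecHead, Matrix.vecTail] <;> push_cast <;> ring_nf⟩
    · exact ⟨(sA*sB*sC)⁻¹ * (sA*sC), by positivity, by simp [Matrix.vecHead, Matrix.vecTail] <;> push_cast <;> ring_nf⟩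
  · have hL : n12 ζ₁ * sdot1 * n23 ζ₂ * sdot2 * n12 ζ₃ * sdot1 =
        !![-Complex.I*ζ₂ - ζ₁*ζ₃, -ζ₁, -1; -ζ₃, -1, 0; -1, 0, 0] := by
      ext i j
      fin_cases i <;> fin_cases j <;>
        simp [n12, n23, sdot1, sdot2, Matrix.mul_fin_three, Matrix.vecHead, Matrix.vecTail] <;>
        first
          | linear_combination (ζ₁*ζ₃ + ζ₂*Complex.I) * Complex.I_sq
          | linear_combination ζ₁ * Complex.I_sq
          | linear_combination ζ₃ * Complex.I_sq
    rw [hL, hk1, hk2, hk3]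
    simp only [smul_mul_assoc, mul_smul_comm, smul_smul]
    rw [key ζ₁ ζ₂ ζ₃ c1 c2 c3 (sA:ℂ) (sB:ℂ) (sC:ℂ) Complex.I_sq cA cB cC, smul_smul]
    rw [show (((sA*sB*sC)⁻¹ : ℝ) : ℂ) * (((sC:ℝ):ℂ)⁻¹ * (((sB:ℝ):ℂ)⁻¹ * ((sA:ℝ):ℂ)⁻¹)) *
        (((sA:ℝ):ℂ) * ((sB:ℝ):ℂ) * ((sC:ℝ):ℂ)) ^ 2 = 1 by
      push_cast
      field_simp]
    rw [one_smul]
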